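/- Let s ≥ 2, n = 2s − 1, and ω ∈ ℝ. Define S_{n−1} = ω, S_{n−3} = S_{n+1} = 1, and S_l = 0 for every other l ∈ {0,…,2n−1}. There exist m ≤ n, nonzero complex numbers Z_1,…,Z_m and pairwise distinct complex numbers z_1,…,z_m with |z_k| = 1 such that ∑_{k=1}^m Z_k z_k^l = S_l for every l = 0,…,2n−1, if and only if U_s(ω/2) = 0. Moreover, in that case m = 2s − 2, the set {z_1,…,z_m} is exactly the set of roots of the polynomial R_{s−1}(ω; z²), and every X_k := Z_k z_k^{n−1} is real. -/

import Mathlib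

/-- r_{-1} = 0, r_0 = 1, r_k(ω) = -ω r_{k-1}(ω) - r_{k-2}(ω); r_k(ω) = (-1)^k U_k(ω/2). -/
def chebr : ℕ → ℝ → ℝ
  | 0 => fun _ => 1
  | 1 => fun ω => -ω
  | (k + 2) => fun ω => -ω * chebr (k + 1) ω - chebr k ω

namespace Stmt16Aux

lemma chebr_rec (k : ℕ) (ω : ℝ) : chebr (k+2) ω = -ω * chebr (k+1) ω - chebr k ω := rfl

lemma chebr_casor (ω : ℝ) : ∀ k : ℕ,
    chebr (k+1) ω * chebr (k+1) ω - chebr (k+2) ω * chebr k ω = 1 := by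
  intro k
  induction k with
  | zero =>
    show chebr 1 ω * chebr 1 ω - chebr 2 ω * chebr 0 ω = 1
    rw [chebr_rec]
    show -ω * -ω - (-ω * -ω - 1) * 1 = 1
    ring
  | succ k ih =>
    rw [chebr_rec (k+1), chebr_rec k] at *
    ring_nf at ih ⊢
    linarith [ih]

lemma chebr_sq_of_root (ω : ℝ) (u : ℕ) (h : chebr (u+1) ω = 0) :
    chebr u ω * chebr u ω = 1 := by
  have h1 := chebr_casor ω u
  have h2 : chebr (u+2) ω = - chebr u ω := by rw [chebr_rec, h]; ring
  rw [h, h2] at h1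
  nlinarith [h1]

lemma chebr_eq_U (ω : ℝ) : ∀ k : ℕ,
    chebr k ω = (-1)^k * (Polynomial.Chebyshev.U ℝ k).eval (ω/2)
  | 0 => by simp [chebr, Polynomial.Chebyshev.U_zero]
  | 1 => by simp [chebr, Polynomial.Chebyshev.U_one]; ring
  | (k+2) => by
    have h1 := chebr_eq_U ω k
    have h2 := chebr_eq_U ω (k+1)
    have h3 : ((k:ℤ)+2) = (k:ℤ) + 2 := rfl
    have hU : Polynomial.Chebyshev.U ℝ ((k:ℤ)+2)
        = 2 * Polynomial.X * Polynomial.Chebyshev.U ℝ ((k:ℤ)+1) - Polynomial.Chebyshev.U ℝ (k:ℤ) :=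
      Polynomial.Chebyshev.U_add_two ℝ k
    have hcast : ((k+2 : ℕ) : ℤ) = (k:ℤ) + 2 := by push_cast; ring
    have hcast1 : ((k+1 : ℕ) : ℤ) = (k:ℤ) + 1 := by push_cast; ring
    rw [chebr_rec, h1, h2, hcast, hU, hcast1]
    simp [Polynomial.eval_mul, Polynomial.eval_sub]
    ring

lemma chebr_zero_iff (ω : ℝ) (u : ℕ) :
    chebr u ω = 0 ↔ (Polynomial.Chebyshev.U ℝ u).eval (ω/2) = 0 := by
  rw [chebr_eq_U]
  constructor
  · intro h
    rcases mul_eq_zero.mp h with h | h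
    · exact absurd h (pow_ne_zero _ (by norm_num))
    · exact h
  · intro h; rw [h, mul_zero]


open Polynomial Finset

noncomputable def Sn (s : ℕ) (ω : ℝ) (l : ℕ) : ℂ :=
  if l = 2*s-2 then (ω:ℂ) else if l = 2*s-4 ∨ l = 2*s then 1 else 0

noncomputable def rc (ω : ℝ) (k : ℕ) : ℂ := ((chebr k ω : ℝ) : ℂ)

lemma rc_zero (ω : ℝ) : rc ω 0 = 1 := by simp [rc, chebr]

lemma rc_one (ω : ℝ) : rc ω 1 = -(ω:ℂ) := by simp [rc, chebr]

lemma rc_rec (ω : ℝ) (k : ℕ) : rc ω (k+2) = -(ω:ℂ) * rc ω (k+1) - rc ω k := by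
  unfold rc; rw [chebr_rec]; push_cast; ring

noncomputable def Pz (s : ℕ) (ω : ℝ) : Polynomial ℂ := ∑ k ∈ range s, C (rc ω k) * X^(2*k)

noncomputable def q4 (ω : ℝ) : Polynomial ℂ := 1 + C (ω:ℂ) * X^2 + X^4

lemma q4_mul_Pz (ω : ℝ) : ∀ t : ℕ, q4 ω * Pz (t+1) ω
    = 1 - C (rc ω (t+1)) * X^(2*t+2) + C (rc ω t) * X^(2*t+4) := by
  intro t
  induction t with
  | zero =>
    have h0 : Pz 1 ω = 1 := by
      rw [Pz, Finset.sum_range_one]; simp [rc_zero]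
    rw [h0, mul_one, q4, rc_one, rc_zero]
    simp only [map_neg, map_one]
    norm_num
  | succ t ih =>
    have hPz : Pz (t+1+1) ω = Pz (t+1) ω + C (rc ω (t+1)) * X^(2*(t+1)) := by
      rw [Pz, Pz, Finset.sum_range_succ]
    have e0 : rc ω (t+1+1) = -(ω:ℂ) * rc ω (t+1) - rc ω t := by
      rw [show t+1+1 = t+2 from rfl, rc_rec]
    rw [hPz, mul_add, ih, e0]
    have e1 : 2*(t+1) = 2*t+2 := by ring
    have e2 : 2*(t+1)+2 = 2*t+4 := by ring
    have e3 : 2*(t+1)+4 = 2*t+6 := by ring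
    rw [q4]
    simp only [e1, e2, e3]
    have e4 : 2*t+2+2 = 2*t+4 := by ring
    have e5 : 2*t+2+4 = 2*t+6 := by ring
    rw [e4, e5]
    simp only [map_sub, map_neg, map_mul]
    ring

lemma Pz_natDegree_le (s : ℕ) (ω : ℝ) (hs : 1 ≤ s) : (Pz s ω).natDegree ≤ 2*s-2 := by
  refine Polynomial.natDegree_sum_le_of_forall_le _ _ ?_
  intro k hk
  refine le_trans (Polynomial.natDegree_C_mul_le _ _) ?_
  rw [Polynomial.natDegree_X_pow]
  simp only [Finset.mem_range] at hk
  omega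

lemma Pz_coeff_even (s : ℕ) (ω : ℝ) (k : ℕ) :
    (Pz s ω).coeff (2*k) = if k < s then rc ω k else 0 := by
  rw [Pz, Polynomial.finset_sum_coeff]
  have h : ∀ i ∈ range s, (C (rc ω i) * X^(2*i)).coeff (2*k)
      = if i = k then rc ω i else 0 := by
    intro i _
    rw [Polynomial.coeff_C_mul, Polynomial.coeff_X_pow]
    by_cases h : i = k
    · subst h; simp
    · rw [if_neg (by omega), if_neg h, mul_zero]
  rw [Finset.sum_congr rfl h, Finset.sum_ite_eq' (range s) k (fun i => rc ω i)]
  simp [Finset.mem_range]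

lemma Pz_coeff_odd (s : ℕ) (ω : ℝ) (k : ℕ) : (Pz s ω).coeff (2*k+1) = 0 := by
  rw [Pz, Polynomial.finset_sum_coeff]
  refine Finset.sum_eq_zero ?_
  intro i _
  rw [Polynomial.coeff_C_mul, Polynomial.coeff_X_pow, if_neg (by omega), mul_zero]

lemma q4_coeff (ω : ℝ) (f : Polynomial ℂ) (j : ℕ) :
    (q4 ω * f).coeff j = f.coeff j + (ω:ℂ) * (if 2 ≤ j then f.coeff (j-2) else 0)
      + (if 4 ≤ j then f.coeff (j-4) else 0) := by
  have h : q4 ω * f = f + (C (ω:ℂ) * f) * X^2 + f * X^4 := by rw [q4]; ring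
  rw [h, Polynomial.coeff_add, Polynomial.coeff_add, Polynomial.coeff_mul_X_pow',
    Polynomial.coeff_mul_X_pow']
  simp only [Polynomial.coeff_C_mul, mul_ite, mul_zero]


lemma vand_finset (u : Finset ℂ) (w : ℂ → ℂ)
    (h : ∀ l, l < u.card → ∑ c ∈ u, w c * c ^ l = 0) :
    ∀ c ∈ u, w c = 0 := by
  intro c hc
  set f : Polynomial ℂ := ∏ c' ∈ u.erase c, (X - C c') with hf
  have hdeg : f.natDegree < u.card := by
    have h1 : f.natDegree = (u.erase c).card := by
      rw [hf, Polynomial.natDegree_prod _ _ (fun i _ => Polynomial.X_sub_C_ne_zero i)]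
      simp [Polynomial.natDegree_X_sub_C]
    rw [h1, Finset.card_erase_of_mem hc]
    have := Finset.card_pos.mpr ⟨c, hc⟩
    omega
  have key : ∑ c' ∈ u, w c' * f.eval c' = 0 := by
    have h1 : ∀ c' ∈ u, w c' * f.eval c' = ∑ l ∈ range u.card, f.coeff l * (w c' * c' ^ l) := by
      intro c' _
      rw [Polynomial.eval_eq_sum_range' hdeg, Finset.mul_sum]
      exact Finset.sum_congr rfl fun l _ => by ring
    rw [Finset.sum_congr rfl h1, Finset.sum_comm]
    refine Finset.sum_eq_zero fun l hl => ?_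
    rw [← Finset.mul_sum, h l (Finset.mem_range.mp hl), mul_zero]
  have h2 : ∑ c' ∈ u, w c' * f.eval c' = w c * f.eval c := by
    refine Finset.sum_eq_single_of_mem c hc fun c' hc' hne => ?_
    have hz : f.eval c' = 0 := by
      rw [hf, Polynomial.eval_prod]
      exact Finset.prod_eq_zero (Finset.mem_erase.mpr ⟨hne, hc'⟩) (by simp)
    rw [hz, mul_zero]
  have h3 : f.eval c ≠ 0 := by
    rw [hf, Polynomial.eval_prod]
    refine Finset.prod_ne_zero_iff.mpr fun c' hc' => ?_
    have hne := (Finset.mem_erase.mp hc').1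
    simp only [Polynomial.eval_sub, Polynomial.eval_X, Polynomial.eval_C, sub_ne_zero]
    exact fun hcon => hne hcon.symm
  have := h2 ▸ key
  rcases mul_eq_zero.mp this with h | h
  · exact h
  · exact absurd h h3

lemma cancel {ι : Type} [Fintype ι] (z : ι → ℂ) (hinj : Function.Injective z) (W : ι → ℂ)
    (h : ∀ l, l < Fintype.card ι → ∑ k, W k * z k ^ l = 0) : ∀ k, W k = 0 := by
  classical
  set u := Finset.univ.image z with hu
  have hcard : u.card = Fintype.card ι := by
    rw [hu, Finset.card_image_of_injective _ hinj, Finset.card_univ]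
  have hw : ∀ c ∈ u, (∑ k ∈ Finset.univ.filter (fun k => z k = c), W k) = 0 := by
    refine vand_finset u _ ?_
    intro l hl
    have e1 : ∑ c ∈ u, (∑ k ∈ Finset.univ.filter (fun k => z k = c), W k) * c ^ l
        = ∑ k, W k * z k ^ l := by
      rw [← Finset.sum_fiberwise_of_maps_to (fun k _ => Finset.mem_image_of_mem z (Finset.mem_univ k))
        (fun k => W k * z k ^ l)]
      refine Finset.sum_congr rfl fun c _ => ?_
      rw [Finset.sum_mul]
      refine Finset.sum_congr rfl fun k hk => ?_
      rw [(Finset.mem_filter.mp hk).2]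
    rw [e1]
    exact h l (by omega)
  intro k
  have hk : z k ∈ u := Finset.mem_image_of_mem z (Finset.mem_univ k)
  have h0 := hw (z k) hk
  have hfz : Finset.univ.filter (fun k' => z k' = z k) = {k} := by
    ext k'; simp [hinj.eq_iff]
  rwa [hfz, Finset.sum_singleton] at h0

lemma matchup {ι ι' : Type} [Fintype ι] [Fintype ι'] (Z z : ι → ℂ) (Z' z' : ι' → ℂ)
    (hZ : ∀ k, Z k ≠ 0) (hinj : Function.Injective z)
    (h : ∀ l, l < Fintype.card ι + Fintype.card ι' → ∑ k, Z k * z k ^ l = ∑ k, Z' k * z' k ^ l) :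
    ∀ j, ∃ i, z' i = z j := by
  classical
  set u := Finset.univ.image z ∪ Finset.univ.image z' with hu
  set w : ℂ → ℂ := fun c => (∑ k ∈ Finset.univ.filter (fun k => z k = c), Z k)
    - (∑ k ∈ Finset.univ.filter (fun k => z' k = c), Z' k) with hw
  have hwz : ∀ c ∈ u, w c = 0 := by
    refine vand_finset u w ?_
    intro l hl
    have hl' : l < Fintype.card ι + Fintype.card ι' := by
      have h1 := Finset.card_union_le (Finset.univ.image z) (Finset.univ.image z')
      have h2 := Finset.card_image_le (s := (Finset.univ : Finset ι)) (f := z)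
      have h3 := Finset.card_image_le (s := (Finset.univ : Finset ι')) (f := z')
      rw [Finset.card_univ] at h2 h3
      rw [hu] at hl
      omega
    have e1 : ∑ c ∈ u, (∑ k ∈ Finset.univ.filter (fun k => z k = c), Z k) * c ^ l
        = ∑ k, Z k * z k ^ l := by
      rw [← Finset.sum_fiberwise_of_maps_to
        (fun k _ => Finset.mem_union_left _ (Finset.mem_image_of_mem z (Finset.mem_univ k)))
        (fun k => Z k * z k ^ l)]
      refine Finset.sum_congr rfl fun c _ => ?_
      rw [Finset.sum_mul]
      refine Finset.sum_congr rfl fun k hk => ?_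
      rw [(Finset.mem_filter.mp hk).2]
    have e2 : ∑ c ∈ u, (∑ k ∈ Finset.univ.filter (fun k => z' k = c), Z' k) * c ^ l
        = ∑ k, Z' k * z' k ^ l := by
      rw [← Finset.sum_fiberwise_of_maps_to
        (fun k _ => Finset.mem_union_right _ (Finset.mem_image_of_mem z' (Finset.mem_univ k)))
        (fun k => Z' k * z' k ^ l)]
      refine Finset.sum_congr rfl fun c _ => ?_
      rw [Finset.sum_mul]
      refine Finset.sum_congr rfl fun k hk => ?_
      rw [(Finset.mem_filter.mp hk).2]
    simp only [hw, sub_mul]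
    rw [Finset.sum_sub_distrib, e1, e2, h l hl', sub_self]
  intro j
  have hj : z j ∈ u := Finset.mem_union_left _ (Finset.mem_image_of_mem z (Finset.mem_univ j))
  have h0 : (∑ k ∈ Finset.univ.filter (fun k' => z k' = z j), Z k)
      - (∑ i ∈ Finset.univ.filter (fun i => z' i = z j), Z' i) = 0 := hwz (z j) hj
  have hfz : Finset.univ.filter (fun k' => z k' = z j) = {j} := by
    ext k'; simp [hinj.eq_iff]
  rw [hfz, Finset.sum_singleton] at h0
  by_contra hno
  push_neg at hno
  have hemp : Finset.univ.filter (fun i => z' i = z j) = ∅ := by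
    ext i; simp [hno i]
  rw [hemp, Finset.sum_empty, sub_zero] at h0
  exact hZ j h0

lemma swap_mom {ι : Type} [Fintype ι] (Zv z : ι → ℂ) (f : Polynomial ℂ) (M : ℕ)
    (hdeg : f.natDegree < M+1) (u : ℕ) :
    ∑ i ∈ range (M+1), f.coeff i * (∑ k, Zv k * z k ^ (u+i))
      = ∑ k, (Zv k * z k ^ u) * f.eval (z k) := by
  have h1 : ∀ i ∈ range (M+1), f.coeff i * (∑ k, Zv k * z k ^ (u+i))
      = ∑ k, f.coeff i * (Zv k * z k ^ (u+i)) := fun i _ => Finset.mul_sum _ _ _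
  rw [Finset.sum_congr rfl h1, Finset.sum_comm]
  refine Finset.sum_congr rfl fun k _ => ?_
  rw [Polynomial.eval_eq_sum_range' hdeg, Finset.mul_sum]
  refine Finset.sum_congr rfl fun i _ => ?_
  rw [pow_add]; ring

lemma Sn_split (s : ℕ) (ω : ℝ) (hs : 2 ≤ s) (x : ℕ) :
    Sn s ω x = (if x = 2*s-4 then (1:ℂ) else 0) + (if x = 2*s-2 then (ω:ℂ) else 0)
      + (if x = 2*s then (1:ℂ) else 0) := by
  unfold Sn
  by_cases h1 : x = 2*s-4
  · rw [if_neg (by omega), if_pos (Or.inl h1), if_pos h1, if_neg (by omega), if_neg (by omega)]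
    ring
  · by_cases h2 : x = 2*s-2
    · rw [if_pos h2, if_neg h1, if_pos h2, if_neg (by omega)]; ring
    · by_cases h3 : x = 2*s
      · rw [if_neg h2, if_pos (Or.inr h3), if_neg h1, if_neg h2, if_pos h3]; ring
      · rw [if_neg h2, if_neg (by tauto), if_neg h1, if_neg h2, if_neg h3]; ring

lemma ite_sum_coeff (f : Polynomial ℂ) (M : ℕ) (hdeg : f.natDegree ≤ M) (u c : ℕ) (w : ℂ) :
    ∑ i ∈ range (M+1), f.coeff i * (if u + i = c then w else 0)
      = (if u ≤ c then f.coeff (c-u) else 0) * w := by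
  rcases le_or_gt u c with h | h
  · have h1 : ∀ i ∈ range (M+1), f.coeff i * (if u + i = c then w else 0)
        = if i = c - u then f.coeff i * w else 0 := by
      intro i _
      by_cases hi : u + i = c
      · rw [if_pos hi, if_pos (by omega)]
      · rw [if_neg hi, if_neg (by omega), mul_zero]
    rw [Finset.sum_congr rfl h1, Finset.sum_ite_eq' (range (M+1)) (c-u) (fun i => f.coeff i * w)]
    by_cases hm : c - u ∈ range (M+1)
    · rw [if_pos hm, if_pos h]
    · rw [if_neg hm, if_pos h, Polynomial.coeff_eq_zero_of_natDegree_lt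
        (by simp only [Finset.mem_range] at hm; omega), zero_mul]
  · have h1 : ∀ i ∈ range (M+1), f.coeff i * (if u + i = c then w else 0) = 0 := by
      intro i _
      rw [if_neg (by omega), mul_zero]
    rw [Finset.sum_congr rfl h1]
    rw [Finset.sum_const_zero, if_neg (by omega), zero_mul]

lemma snsum (s : ℕ) (ω : ℝ) (hs : 2 ≤ s) (f : Polynomial ℂ) (M : ℕ) (hdeg : f.natDegree ≤ M)
    (u : ℕ) :
    ∑ i ∈ range (M+1), f.coeff i * Sn s ω (u+i)
      = (if u ≤ 2*s-4 then f.coeff (2*s-4-u) else 0)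
        + (ω:ℂ) * (if u ≤ 2*s-2 then f.coeff (2*s-2-u) else 0)
        + (if u ≤ 2*s then f.coeff (2*s-u) else 0) := by
  have h1 : ∀ i ∈ range (M+1), f.coeff i * Sn s ω (u+i)
      = f.coeff i * (if u + i = 2*s-4 then (1:ℂ) else 0)
        + f.coeff i * (if u + i = 2*s-2 then (ω:ℂ) else 0)
        + f.coeff i * (if u + i = 2*s then (1:ℂ) else 0) := by
    intro i _
    rw [Sn_split s ω hs (u+i)]
    ring
  rw [Finset.sum_congr rfl h1]
  rw [Finset.sum_add_distrib, Finset.sum_add_distrib]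
  rw [ite_sum_coeff f M hdeg u (2*s-4) 1, ite_sum_coeff f M hdeg u (2*s-2) (ω:ℂ),
    ite_sum_coeff f M hdeg u (2*s) 1, mul_one, mul_one]
  ring

lemma lowm {ι : Type} [Fintype ι] (s : ℕ) (ω : ℝ) (hs : 2 ≤ s) (Z z : ι → ℂ)
    (hz0 : ∀ k, z k ≠ 0) (hcard : Fintype.card ι ≤ 2*s-3)
    (hmom : ∀ l, l ≤ 4*s-3 → ∑ k, Z k * z k ^ l = Sn s ω l) : False := by
  classical
  set p : Polynomial ℂ := ∏ k, (X - C (z k)) with hp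
  have hdeg : p.natDegree = Fintype.card ι := by
    rw [hp, Polynomial.natDegree_prod _ _ (fun i _ => Polynomial.X_sub_C_ne_zero _)]
    simp [Polynomial.natDegree_X_sub_C, Finset.card_univ]
  have heval : ∀ k, p.eval (z k) = 0 := fun k => by
    rw [hp, Polynomial.eval_prod]
    exact Finset.prod_eq_zero (Finset.mem_univ k) (by simp)
  set M := Fintype.card ι with hM
  have h1 : ∑ i ∈ range (M+1), p.coeff i * Sn s ω (2*s+i) = 0 := by
    have e : ∀ i ∈ range (M+1), p.coeff i * Sn s ω (2*s+i)
        = p.coeff i * (∑ k, Z k * z k ^ (2*s+i)) := by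
      intro i hi
      rw [hmom (2*s+i) (by simp only [Finset.mem_range] at hi; omega)]
    rw [Finset.sum_congr rfl e, swap_mom Z z p M (by omega) (2*s)]
    exact Finset.sum_eq_zero fun k _ => by rw [heval k, mul_zero]
  rw [snsum s ω hs p M (by omega) (2*s)] at h1
  rw [if_neg (by omega), if_neg (by omega), if_pos (le_refl _), Nat.sub_self] at h1
  have h0 : p.coeff 0 = 0 := by
    have : (0:ℂ) + (ω:ℂ) * 0 + p.coeff 0 = p.coeff 0 := by ring
    rw [this] at h1
    exact h1
  have hne : p.coeff 0 ≠ 0 := by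
    rw [Polynomial.coeff_zero_eq_eval_zero, hp, Polynomial.eval_prod]
    refine Finset.prod_ne_zero_iff.mpr fun k _ => ?_
    simp only [Polynomial.eval_sub, Polynomial.eval_X, Polynomial.eval_C, zero_sub, neg_ne_zero]
    exact hz0 k
  exact hne h0


lemma Sn_conj_sym (s : ℕ) (ω : ℝ) (hs : 2 ≤ s) (l : ℕ) (hl : l ≤ 4*s-4) :
    (starRingEnd ℂ) (Sn s ω (4*s-4-l)) = Sn s ω l := by
  unfold Sn
  by_cases h1 : l = 2*s-2
  · rw [if_pos (by omega), if_pos h1, Complex.conj_ofReal]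
  · by_cases h2 : l = 2*s-4
    · rw [if_neg (by omega), if_pos (by omega), if_neg h1, if_pos (Or.inl h2), map_one]
    · by_cases h3 : l = 2*s
      · rw [if_neg (by omega), if_pos (by omega), if_neg h1, if_pos (Or.inr h3), map_one]
      · rw [if_neg (by omega), if_neg (by omega), if_neg h1, if_neg (by tauto), map_zero]

lemma partA {ι : Type} [Fintype ι] (s : ℕ) (ω : ℝ) (hs : 2 ≤ s) (Z z : ι → ℂ)
    (hZ : ∀ k, Z k ≠ 0) (hinj : Function.Injective z)
    (habs : ∀ k, ‖z k‖ = 1) (hcard : Fintype.card ι ≤ 2*s-1)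
    (hmom : ∀ l, l ≤ 4*s-3 → ∑ k, Z k * z k ^ l = Sn s ω l) :
    chebr s ω = 0 ∧ Fintype.card ι = 2*s-2 ∧
      (Set.range z = {t : ℂ | ∑ k ∈ Finset.range s, ((chebr k ω : ℝ) : ℂ) * t ^ (2*k) = 0}) ∧
      (∀ k, (starRingEnd ℂ) (Z k * z k ^ (2*s-2)) = Z k * z k ^ (2*s-2)) := by
  classical
  have hz0 : ∀ k, z k ≠ 0 := by
    intro k hk
    have := habs k
    rw [hk, norm_zero] at this
    norm_num at this
  -- Step 1: the number of nodes is exactly 2s-2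
  have hm : Fintype.card ι = 2*s-2 := by
    by_contra hne
    rcases Nat.lt_or_ge (Fintype.card ι) (2*s-2) with hlt | hge
    · exact lowm s ω hs Z z hz0 (by omega) hmom
    · have hcard' : Fintype.card ι = 2*s-1 := by omega
      have hmatch := matchup Z z Z (fun k => -z k) hZ hinj (by
        intro l hl
        have hle : l ≤ 4*s-3 := by omega
        have h1 : ∑ k, Z k * (-z k)^l = (-1:ℂ)^l * ∑ k, Z k * z k ^ l := by
          rw [Finset.mul_sum]
          refine Finset.sum_congr rfl fun k _ => ?_
          rw [neg_pow]; ring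
        rw [hmom l hle, h1, hmom l hle]
        rcases Nat.even_or_odd l with he | ho
        · rw [he.neg_one_pow, one_mul]
        · obtain ⟨r, hr⟩ := ho
          have hSn0 : Sn s ω l = 0 := by
            unfold Sn
            rw [if_neg (by omega), if_neg (by push_neg; omega)]
          rw [hSn0, mul_zero])
      set σ : ι → ι := fun j => (hmatch j).choose with hσdef
      have hσ : ∀ j, -z (σ j) = z j := fun j => (hmatch j).choose_spec
      have hσinj : Function.Injective σ := by
        intro a b hab
        apply hinj
        calc z a = -z (σ a) := (hσ a).symm
          _ = -z (σ b) := by rw [hab]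
          _ = z b := hσ b
      have hσbij := Finite.injective_iff_bijective.mp hσinj
      have hpc : ∏ k, z (σ k) = ∏ k, z k := Equiv.prod_comp (Equiv.ofBijective σ hσbij) z
      have hprod : ∏ k, z k = (-1:ℂ)^(Fintype.card ι) * ∏ k, z k := by
        calc ∏ k, z k = ∏ k, -z (σ k) := Finset.prod_congr rfl fun k _ => (hσ k).symm
          _ = ∏ k, (-1:ℂ) * z (σ k) := Finset.prod_congr rfl fun k _ => by ring
          _ = ((-1:ℂ)^(Fintype.card ι)) * ∏ k, z (σ k) := by
              rw [Finset.prod_mul_distrib, Finset.prod_const, Finset.card_univ]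
          _ = _ := by rw [hpc]
      have hPne : (∏ k, z k) ≠ 0 := Finset.prod_ne_zero_iff.mpr fun k _ => hz0 k
      rw [hcard'] at hprod
      have hodd : Odd (2*s-1) := ⟨s-1, by omega⟩
      rw [hodd.neg_one_pow] at hprod
      exact hPne (by linear_combination ((1:ℂ)/2) * hprod)
  -- Step 2: node polynomial p and its coefficient recursions
  set p : Polynomial ℂ := ∏ k, (X - C (z k)) with hp
  have hmono : p.Monic := Polynomial.monic_prod_of_monic _ _ fun k _ => Polynomial.monic_X_sub_C _
  have hdegp : p.natDegree = 2*s-2 := by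
    rw [hp, Polynomial.natDegree_prod _ _ (fun i _ => Polynomial.X_sub_C_ne_zero _)]
    simp [Polynomial.natDegree_X_sub_C, Finset.card_univ, hm]
  have heval : ∀ k, p.eval (z k) = 0 := fun k => by
    rw [hp, Polynomial.eval_prod]
    exact Finset.prod_eq_zero (Finset.mem_univ k) (by simp)
  have hp0 : p.coeff 0 ≠ 0 := by
    rw [Polynomial.coeff_zero_eq_eval_zero, hp, Polynomial.eval_prod]
    refine Finset.prod_ne_zero_iff.mpr fun k _ => ?_
    simp only [Polynomial.eval_sub, Polynomial.eval_X, Polynomial.eval_C, zero_sub, neg_ne_zero]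
    exact hz0 k
  have rel : ∀ j, 1 ≤ j → j ≤ 2*s →
      (if 4 ≤ j then p.coeff (j-4) else 0) + (ω:ℂ) * (if 2 ≤ j then p.coeff (j-2) else 0)
        + p.coeff j = 0 := by
    intro j hj1 hj2
    have h1 : ∑ i ∈ range (2*s-2+1), p.coeff i * Sn s ω ((2*s-j)+i) = 0 := by
      have e : ∀ i ∈ range (2*s-2+1), p.coeff i * Sn s ω ((2*s-j)+i)
          = p.coeff i * (∑ k, Z k * z k ^ ((2*s-j)+i)) := by
        intro i hi
        rw [hmom ((2*s-j)+i) (by simp only [Finset.mem_range] at hi; omega)]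
      rw [Finset.sum_congr rfl e, swap_mom Z z p (2*s-2) (by omega) (2*s-j)]
      exact Finset.sum_eq_zero fun k _ => by rw [heval k, mul_zero]
    rw [snsum s ω hs p (2*s-2) (by omega) (2*s-j)] at h1
    have e1 : (if 2*s-j ≤ 2*s-4 then p.coeff (2*s-4-(2*s-j)) else 0)
        = (if 4 ≤ j then p.coeff (j-4) else 0) := by
      rcases le_or_gt 4 j with h | h
      · rw [if_pos (by omega), if_pos h]
        congr 1
        omega
      · rw [if_neg (by omega), if_neg (by omega)]
    have e2 : (if 2*s-j ≤ 2*s-2 then p.coeff (2*s-2-(2*s-j)) else 0)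
        = (if 2 ≤ j then p.coeff (j-2) else 0) := by
      rcases le_or_gt 2 j with h | h
      · rw [if_pos (by omega), if_pos h]
        congr 1
        omega
      · rw [if_neg (by omega), if_neg (by omega)]
    have e3 : (if 2*s-j ≤ 2*s then p.coeff (2*s-(2*s-j)) else 0) = p.coeff j := by
      rw [if_pos (by omega)]
      congr 1
      omega
    rw [e1, e2, e3] at h1
    exact h1
  have even : ∀ k, k ≤ s → p.coeff (2*k) = p.coeff 0 * rc ω k := by
    intro k
    induction k using Nat.strong_induction_on with
    | _ k ih =>
      match k, ih with
      | 0, _ => intro _; simp [rc_zero]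
      | 1, _ =>
        intro _
        have h2 := rel 2 (by omega) (by omega)
        rw [if_neg (by omega), if_pos (by omega)] at h2
        norm_num at h2
        rw [rc_one]
        linear_combination h2
      | (k+2), ih =>
        intro hk
        have h2 := rel (2*k+4) (by omega) (by omega)
        rw [if_pos (by omega), if_pos (by omega)] at h2
        have ea : 2*k+4-4 = 2*k := by omega
        have eb : 2*k+4-2 = 2*(k+1) := by omega
        rw [ea, eb] at h2
        have i1 := ih k (by omega) (by omega)
        have i2 := ih (k+1) (by omega) (by omega)
        rw [i1, i2] at h2
        have ec : 2*(k+2) = 2*k+4 := by omega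
        rw [ec, rc_rec]
        linear_combination h2
  have hodd0 : ∀ k, 2*k+1 ≤ 2*s-1 → p.coeff (2*k+1) = 0 := by
    have hp1 : p.coeff 1 = 0 := by
      have h2 := rel 1 (by omega) (by omega)
      rw [if_neg (by omega), if_neg (by omega)] at h2
      linear_combination h2
    intro k
    induction k using Nat.strong_induction_on with
    | _ k ih =>
      match k, ih with
      | 0, _ => intro _; exact hp1
      | 1, _ =>
        intro _
        have h2 := rel 3 (by omega) (by omega)
        rw [if_neg (by omega), if_pos (by omega)] at h2
        norm_num at h2
        rw [hp1] at h2
        linear_combination h2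
      | (k+2), ih =>
        intro hk
        have h2 := rel (2*k+5) (by omega) (by omega)
        rw [if_pos (by omega), if_pos (by omega)] at h2
        have ea : 2*k+5-4 = 2*k+1 := by omega
        have eb : 2*k+5-2 = 2*(k+1)+1 := by omega
        rw [ea, eb] at h2
        rw [ih k (by omega) (by omega), ih (k+1) (by omega) (by omega)] at h2
        have ec : 2*(k+2)+1 = 2*k+5 := by omega
        rw [ec]
        linear_combination h2
  have hrs : rc ω s = 0 := by
    have h1 := even s (le_refl s)
    have h2 : p.coeff (2*s) = 0 :=
      Polynomial.coeff_eq_zero_of_natDegree_lt (by omega)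
    rw [h2] at h1
    rcases mul_eq_zero.mp h1.symm with h | h
    · exact absurd h hp0
    · exact h
  have hchebs : chebr s ω = 0 := by
    have : ((chebr s ω : ℝ) : ℂ) = 0 := hrs
    exact_mod_cast this
  have h01 : p.coeff 0 * rc ω (s-1) = 1 := by
    have h1 := even (s-1) (by omega)
    have h2 : 2*(s-1) = 2*s-2 := by omega
    rw [h2] at h1
    have h3 : p.coeff (2*s-2) = 1 := by
      have := Polynomial.Monic.coeff_natDegree hmono
      rwa [hdegp] at this
    rw [h3] at h1
    exact h1.symm
  -- Step 3: p = C (p.coeff 0) * Pz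
  have hpPz : p = C (p.coeff 0) * Pz s ω := by
    apply Polynomial.ext
    intro d
    rw [Polynomial.coeff_C_mul]
    rcases Nat.even_or_odd d with he | ho
    · obtain ⟨k, hk⟩ := he
      have hd : d = 2*k := by omega
      subst hd
      rw [Pz_coeff_even]
      by_cases hks : k < s
      · rw [if_pos hks]
        exact even k (by omega)
      · rw [if_neg hks, mul_zero]
        exact Polynomial.coeff_eq_zero_of_natDegree_lt (by omega)
    · obtain ⟨k, hk⟩ := ho
      subst hk
      rw [Pz_coeff_odd, mul_zero]
      by_cases h : 2*k+1 ≤ 2*s-1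
      · exact hodd0 k h
      · exact Polynomial.coeff_eq_zero_of_natDegree_lt (by omega)
  -- Step 4: range of nodes
  have hrange : Set.range z = {t : ℂ | ∑ k ∈ Finset.range s, ((chebr k ω : ℝ) : ℂ) * t ^ (2*k) = 0} := by
    ext t
    simp only [Set.mem_range, Set.mem_setOf_eq]
    have hev : ∑ k ∈ Finset.range s, ((chebr k ω : ℝ) : ℂ) * t ^ (2*k) = (Pz s ω).eval t := by
      rw [Pz, Polynomial.eval_finset_sum]
      refine Finset.sum_congr rfl fun k _ => ?_
      simp [rc]
    rw [hev]
    constructor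
    · rintro ⟨k, rfl⟩
      have h := heval k
      rw [hpPz, Polynomial.eval_mul, Polynomial.eval_C] at h
      rcases mul_eq_zero.mp h with h | h
      · exact absurd h hp0
      · exact h
    · intro h
      have hpt : p.eval t = 0 := by
        rw [hpPz, Polynomial.eval_mul, Polynomial.eval_C, h, mul_zero]
      rw [hp, Polynomial.eval_prod] at hpt
      obtain ⟨k, _, hk⟩ := Finset.prod_eq_zero_iff.mp hpt
      simp only [Polynomial.eval_sub, Polynomial.eval_X, Polynomial.eval_C, sub_eq_zero] at hk
      exact ⟨k, hk.symm⟩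
  -- Step 5: reality of the weights X_k
  have hczz : ∀ k, z k * (starRingEnd ℂ) (z k) = 1 := by
    intro k
    rw [Complex.mul_conj, Complex.normSq_eq_norm_sq, habs k]
    norm_num
  have hW : ∀ k, (starRingEnd ℂ) (Z k) * ((starRingEnd ℂ) (z k))^(4*s-4) - Z k = 0 := by
    apply cancel z hinj
    intro l hl
    rw [hm] at hl
    have hterm : ∀ k, ((starRingEnd ℂ) (Z k) * ((starRingEnd ℂ) (z k))^(4*s-4) - Z k) * z k ^ l
        = (starRingEnd ℂ) (Z k) * ((starRingEnd ℂ) (z k))^(4*s-4-l) - Z k * z k ^ l := by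
      intro k
      have h1 : ((starRingEnd ℂ) (z k))^(4*s-4) = ((starRingEnd ℂ) (z k))^(4*s-4-l) * ((starRingEnd ℂ) (z k))^l := by
        rw [← pow_add]
        congr 1
        omega
      have h2 : ((starRingEnd ℂ) (z k))^l * z k ^ l = 1 := by
        rw [← mul_pow, mul_comm, hczz k, one_pow]
      rw [h1]
      linear_combination ((starRingEnd ℂ) (Z k) * ((starRingEnd ℂ) (z k))^(4*s-4-l)) * h2
    have hsum : ∑ k, ((starRingEnd ℂ) (Z k) * ((starRingEnd ℂ) (z k))^(4*s-4-l) : ℂ)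
        = Sn s ω l := by
      have h3 : ∑ k, ((starRingEnd ℂ) (Z k) * ((starRingEnd ℂ) (z k))^(4*s-4-l) : ℂ)
          = (starRingEnd ℂ) (∑ k, Z k * z k ^ (4*s-4-l)) := by
        rw [map_sum]
        exact Finset.sum_congr rfl fun k _ => by rw [map_mul, map_pow]
      rw [h3, hmom (4*s-4-l) (by omega), Sn_conj_sym s ω hs l (by omega)]
    calc ∑ k, ((starRingEnd ℂ) (Z k) * ((starRingEnd ℂ) (z k))^(4*s-4) - Z k) * z k ^ l
        = ∑ k, ((starRingEnd ℂ) (Z k) * ((starRingEnd ℂ) (z k))^(4*s-4-l) - Z k * z k ^ l) :=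
          Finset.sum_congr rfl fun k _ => hterm k
      _ = (∑ k, (starRingEnd ℂ) (Z k) * ((starRingEnd ℂ) (z k))^(4*s-4-l)) - ∑ k, Z k * z k ^ l :=
          Finset.sum_sub_distrib _ _
      _ = Sn s ω l - Sn s ω l := by rw [hsum, hmom l (by omega)]
      _ = 0 := sub_self _
  have hreal : ∀ k, (starRingEnd ℂ) (Z k * z k ^ (2*s-2)) = Z k * z k ^ (2*s-2) := by
    intro k
    have hWk : (starRingEnd ℂ) (Z k) * ((starRingEnd ℂ) (z k))^(4*s-4) = Z k := by
      have := hW k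
      linear_combination this
    have hBC : ((starRingEnd ℂ) (z k))^(2*s-2) * (z k)^(2*s-2) = 1 := by
      rw [← mul_pow, mul_comm, hczz k, one_pow]
    have h44 : (4:ℕ)*s-4 = (2*s-2) + (2*s-2) := by omega
    rw [map_mul, map_pow]
    calc (starRingEnd ℂ) (Z k) * ((starRingEnd ℂ) (z k))^(2*s-2)
        = ((starRingEnd ℂ) (Z k) * ((starRingEnd ℂ) (z k))^(4*s-4)) * (z k)^(2*s-2) := by
          rw [h44, pow_add]
          linear_combination (-(starRingEnd ℂ) (Z k) * ((starRingEnd ℂ) (z k))^(2*s-2)) * hBC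
      _ = Z k * z k ^ (2*s-2) := by rw [hWk]
  exact ⟨hchebs, hm, hrange, hreal⟩


lemma construct (s : ℕ) (ω : ℝ) (hs : 2 ≤ s) (hroot : chebr s ω = 0) :
    ∃ (Z z : Fin (2*s-2) → ℂ), (∀ k, Z k ≠ 0) ∧ Function.Injective z ∧
      (∀ k, ‖z k‖ = 1) ∧ ∀ l, l ≤ 4*s-3 → ∑ k, Z k * z k ^ l = Sn s ω l := by
  classical
  have hrs : rc ω s = 0 := by rw [rc, hroot]; simp
  have heps : chebr (s-1) ω * chebr (s-1) ω = 1 := by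
    have := chebr_sq_of_root ω (s-1) (by rw [show s-1+1 = s from by omega]; exact hroot)
    exact this
  have hepsne : rc ω (s-1) ≠ 0 := by
    rw [rc]
    simp only [ne_eq, Complex.ofReal_eq_zero]
    intro h
    rw [h] at heps
    norm_num at heps
  have habsrc : ‖rc ω (s-1)‖ = 1 := by
    rcases mul_self_eq_one_iff.mp heps with h | h <;> rw [rc, h] <;> simp
  have hW : q4 ω * Pz s ω = 1 + C (rc ω (s-1)) * X^(2*s+2) := by
    have h := q4_mul_Pz ω (s-1)
    rw [show s-1+1 = s from by omega] at h
    rw [hrs, map_zero, zero_mul, sub_zero] at h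
    rw [show 2*(s-1)+4 = 2*s+2 from by omega] at h
    exact h
  have hleadPz : (Pz s ω).coeff (2*s-2) = rc ω (s-1) := by
    have := Pz_coeff_even s ω (s-1)
    rw [show 2*(s-1) = 2*s-2 from by omega, if_pos (by omega)] at this
    exact this
  have hdegPz : (Pz s ω).natDegree = 2*s-2 := by
    refine le_antisymm (Pz_natDegree_le s ω (by omega)) ?_
    exact Polynomial.le_natDegree_of_ne_zero (by rw [hleadPz]; exact hepsne)
  have hPzne : Pz s ω ≠ 0 := fun h => hepsne (by rw [← hleadPz, h, Polynomial.coeff_zero])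
  have hcardroots : (Pz s ω).roots.card = 2*s-2 := by
    rw [Polynomial.splits_iff_card_roots.mp (IsAlgClosed.splits _), hdegPz]
  have hnodup : (Pz s ω).roots.Nodup := by
    rw [Multiset.nodup_iff_count_le_one]
    intro t
    rw [Polynomial.count_roots]
    by_contra hgt
    push_neg at hgt
    have hdvd : (X - C t)^2 ∣ Pz s ω :=
      dvd_trans (pow_dvd_pow (X - C t) (show 2 ≤ (Pz s ω).rootMultiplicity t by omega))
        (Polynomial.pow_rootMultiplicity_dvd (Pz s ω) t)
    have hdvdW : (X - C t)^2 ∣ ((1:Polynomial ℂ) + C (rc ω (s-1)) * X^(2*s+2)) := by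
      rw [← hW]
      exact hdvd.mul_left _
    obtain ⟨g, hg⟩ := hdvdW
    have hWt : ((1:Polynomial ℂ) + C (rc ω (s-1)) * X^(2*s+2)).eval t = 0 := by
      rw [hg]
      simp
    have hW't : (Polynomial.derivative ((1:Polynomial ℂ) + C (rc ω (s-1)) * X^(2*s+2))).eval t = 0 := by
      rw [hg, Polynomial.derivative_mul, Polynomial.derivative_pow]
      simp
    have hder : Polynomial.derivative ((1:Polynomial ℂ) + C (rc ω (s-1)) * X^(2*s+2))
        = C (rc ω (s-1)) * (C ((2*s+2 : ℕ) : ℂ) * X^(2*s+1)) := by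
      rw [Polynomial.derivative_add, Polynomial.derivative_one, Polynomial.derivative_C_mul,
        Polynomial.derivative_X_pow, zero_add, show 2*s+2-1 = 2*s+1 from by omega]
    rw [hder] at hW't
    simp only [Polynomial.eval_mul, Polynomial.eval_C, Polynomial.eval_pow, Polynomial.eval_X] at hW't
    have ht0 : t = 0 := by
      rcases mul_eq_zero.mp hW't with h | h
      · exact absurd h hepsne
      · rcases mul_eq_zero.mp h with h' | h'
        · exfalso
          have hne2 : ((2*s+2 : ℕ) : ℂ) ≠ 0 := by
            simp only [ne_eq, Nat.cast_eq_zero]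
            omega
          exact hne2 h'
        · exact pow_eq_zero_iff (show 2*s+1 ≠ 0 by omega) |>.mp h'
    rw [ht0] at hWt
    simp only [Polynomial.eval_add, Polynomial.eval_one, Polynomial.eval_mul, Polynomial.eval_C,
      Polynomial.eval_pow, Polynomial.eval_X] at hWt
    rw [zero_pow (by omega), mul_zero, add_zero] at hWt
    exact one_ne_zero hWt
  have hcardF : (Pz s ω).roots.toFinset.card = 2*s-2 := by
    rw [Multiset.toFinset_card_of_nodup hnodup, hcardroots]
  set e := Finset.equivFinOfCardEq hcardF with he
  set z : Fin (2*s-2) → ℂ := fun k => ((e.symm k : (Pz s ω).roots.toFinset) : ℂ) with hz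
  have hzinj : Function.Injective z := by
    intro a b hab
    exact e.symm.injective (Subtype.ext hab)
  have hzroot : ∀ k, (Pz s ω).eval (z k) = 0 := by
    intro k
    have hmem : (z k) ∈ (Pz s ω).roots.toFinset := (e.symm k).2
    rw [Multiset.mem_toFinset, Polynomial.mem_roots hPzne] at hmem
    exact hmem
  have hzW : ∀ k, rc ω (s-1) * (z k)^(2*s+2) = -1 := by
    intro k
    have h1 : (q4 ω * Pz s ω).eval (z k) = 0 := by
      rw [Polynomial.eval_mul, hzroot k, mul_zero]
    rw [hW] at h1
    simp only [Polynomial.eval_add, Polynomial.eval_one, Polynomial.eval_mul, Polynomial.eval_C,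
      Polynomial.eval_pow, Polynomial.eval_X] at h1
    linear_combination h1
  have habs : ∀ k, ‖z k‖ = 1 := by
    intro k
    have h1 : ‖rc ω (s-1) * (z k)^(2*s+2)‖ = 1 := by
      rw [hzW k]
      simp
    rw [norm_mul, norm_pow, habsrc, one_mul] at h1
    rcases lt_trichotomy (‖z k‖) 1 with h | h | h
    · exfalso
      have := pow_lt_one₀ (norm_nonneg _) h (by omega : 2*s+2 ≠ 0)
      rw [h1] at this
      exact lt_irrefl _ this
    · exact h
    · exfalso
      have := one_lt_pow₀ h (by omega : 2*s+2 ≠ 0)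
      rw [h1] at this
      exact lt_irrefl _ this
  have hz0 : ∀ k, z k ≠ 0 := by
    intro k hk
    have := habs k
    rw [hk, norm_zero] at this
    norm_num at this
  -- weights
  set T : (Fin (2*s-2) → ℂ) →ₗ[ℂ] (Fin (2*s-2) → ℂ) :=
    { toFun := fun W l => ∑ k, W k * z k ^ (l : ℕ),
      map_add' := by
        intro a b
        funext l
        simp [add_mul, Finset.sum_add_distrib]
      map_smul' := by
        intro c a
        funext l
        simp [Finset.mul_sum, mul_assoc] } with hT
  have hTinj : Function.Injective T := by
    intro a b hab
    funext k
    have hc := cancel z hzinj (fun k => a k - b k) ?_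
    · have := hc k
      linear_combination this
    · intro l hl
      rw [Fintype.card_fin] at hl
      have h1 := congrFun hab ⟨l, hl⟩
      simp only [hT, LinearMap.coe_mk, AddHom.coe_mk] at h1
      have : ∀ k : Fin (2*s-2), (a k - b k) * z k ^ l = a k * z k ^ l - b k * z k ^ l :=
        fun k => by ring
      rw [Finset.sum_congr rfl (fun k _ => this k), Finset.sum_sub_distrib, h1, sub_self]
  have hTsurj := (LinearMap.injective_iff_surjective).mp hTinj
  obtain ⟨Zv, hZv⟩ := hTsurj (fun l : Fin (2*s-2) => Sn s ω (l : ℕ))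
  have hZvl : ∀ l : ℕ, l < 2*s-2 → ∑ k, Zv k * z k ^ l = Sn s ω l := by
    intro l hl
    have h1 := congrFun hZv ⟨l, hl⟩
    simp only [hT, LinearMap.coe_mk, AddHom.coe_mk] at h1
    exact h1
  have hclead : (Pz s ω).coeff (2*s-2) ≠ 0 := by rw [hleadPz]; exact hepsne
  have hfull : ∀ l, l ≤ 4*s-3 → ∑ k, Zv k * z k ^ l = Sn s ω l := by
    intro l
    induction l using Nat.strong_induction_on with
    | _ l ih =>
      intro hl
      rcases Nat.lt_or_ge l (2*s-2) with hlm | hlm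
      · exact hZvl l hlm
      · set u := l - (2*s-2) with hu
        have hA : ∑ i ∈ range (2*s-2+1), (Pz s ω).coeff i * (∑ k, Zv k * z k ^ (u+i)) = 0 := by
          rw [swap_mom Zv z (Pz s ω) (2*s-2) (by omega) u]
          exact Finset.sum_eq_zero fun k _ => by rw [hzroot k, mul_zero]
        have hB : ∑ i ∈ range (2*s-2+1), (Pz s ω).coeff i * Sn s ω (u+i) = 0 := by
          rw [snsum s ω hs (Pz s ω) (2*s-2) (by omega) u]
          have hu1 : u ≤ 2*s-1 := by omega
          have hWcoeff : ∀ j', 1 ≤ j' → j' ≤ 2*s+1 →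
              (Pz s ω).coeff j' + (ω:ℂ) * (if 2 ≤ j' then (Pz s ω).coeff (j'-2) else 0)
                + (if 4 ≤ j' then (Pz s ω).coeff (j'-4) else 0) = 0 := by
            intro j' h1 h2
            have hq := q4_coeff ω (Pz s ω) j'
            rw [hW] at hq
            have hc : ((1 : Polynomial ℂ) + C (rc ω (s-1)) * X^(2*s+2)).coeff j' = 0 := by
              rw [Polynomial.coeff_add, Polynomial.coeff_one, Polynomial.coeff_C_mul,
                Polynomial.coeff_X_pow, if_neg (by omega), if_neg (by omega), mul_zero, add_zero]
            rw [hc] at hq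
            linear_combination -hq
          have hmain := hWcoeff (2*s-u) (by omega) (by omega)
          have e1 : (if u ≤ 2*s-4 then (Pz s ω).coeff (2*s-4-u) else 0)
              = (if 4 ≤ 2*s-u then (Pz s ω).coeff (2*s-u-4) else 0) := by
            rcases le_or_gt u (2*s-4) with h | h
            · rw [if_pos h, if_pos (by omega)]
              congr 1
              omega
            · rw [if_neg (by omega), if_neg (by omega)]
          have e2 : (if u ≤ 2*s-2 then (Pz s ω).coeff (2*s-2-u) else 0)
              = (if 2 ≤ 2*s-u then (Pz s ω).coeff (2*s-u-2) else 0) := by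
            rcases le_or_gt u (2*s-2) with h | h
            · rw [if_pos h, if_pos (by omega)]
              congr 1
              omega
            · rw [if_neg (by omega), if_neg (by omega)]
          have e3 : (if u ≤ 2*s then (Pz s ω).coeff (2*s-u) else 0) = (Pz s ω).coeff (2*s-u) := by
            rw [if_pos (by omega)]
          rw [e1, e2, e3]
          linear_combination hmain
        have hsub : ∑ i ∈ range (2*s-2+1),
            (Pz s ω).coeff i * ((∑ k, Zv k * z k ^ (u+i)) - Sn s ω (u+i)) = 0 := by
          have hdist : ∀ i ∈ range (2*s-2+1),
              (Pz s ω).coeff i * ((∑ k, Zv k * z k ^ (u+i)) - Sn s ω (u+i))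
                = (Pz s ω).coeff i * (∑ k, Zv k * z k ^ (u+i))
                  - (Pz s ω).coeff i * Sn s ω (u+i) := fun i _ => by ring
          rw [Finset.sum_congr rfl hdist, Finset.sum_sub_distrib, hA, hB, sub_self]
        rw [Finset.sum_range_succ] at hsub
        have hzprev : ∑ i ∈ range (2*s-2),
            (Pz s ω).coeff i * ((∑ k, Zv k * z k ^ (u+i)) - Sn s ω (u+i)) = 0 := by
          refine Finset.sum_eq_zero fun i hi => ?_
          simp only [Finset.mem_range] at hi
          rw [ih (u+i) (by omega) (by omega), sub_self, mul_zero]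
        rw [hzprev, zero_add, show u + (2*s-2) = l from by omega] at hsub
        rcases mul_eq_zero.mp hsub with h | h
        · exact absurd h hclead
        · linear_combination h
  have hZne : ∀ j, Zv j ≠ 0 := by
    intro j hj0
    have hcards : Fintype.card {k : Fin (2*s-2) // k ≠ j} = 2*s-3 := by
      rw [Fintype.card_subtype_compl, Fintype.card_subtype_eq, Fintype.card_fin]
      omega
    refine lowm s ω hs (fun k : {k : Fin (2*s-2) // k ≠ j} => Zv k.1) (fun k => z k.1)
      (fun k => hz0 k.1) (by omega) ?_
    intro l hl
    have hsp : ∑ k : {k : Fin (2*s-2) // k ≠ j}, Zv k.1 * z k.1 ^ l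
        = ∑ k ∈ Finset.univ.erase j, Zv k * z k ^ l :=
      (Finset.sum_subtype (p := fun k => k ≠ j) (Finset.univ.erase j)
        (fun x => by simp [Finset.mem_erase]) (fun k => Zv k * z k ^ l)).symm
    rw [hsp]
    have htot := Finset.add_sum_erase Finset.univ (fun k => Zv k * z k ^ l) (Finset.mem_univ j)
    simp only [hj0, zero_mul, zero_add] at htot
    rw [htot]
    exact hfull l hl
  exact ⟨Zv, z, hZne, hzinj, habs, hfull⟩


lemma ITE_eq (s n : ℕ) (ω : ℝ) (hs : 2 ≤ s) (hn : n = 2*s-1) (l : ℕ) :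
    (if (l:ℤ) = (n:ℤ) - 1 then (ω:ℂ) else if (l:ℤ) = (n:ℤ) - 3 ∨ (l:ℤ) = (n:ℤ) + 1 then 1 else 0)
      = Sn s ω l := by
  unfold Sn
  by_cases c1 : l = 2*s-2
  · rw [if_pos (by omega), if_pos c1]
  · rw [if_neg (by omega), if_neg c1]
    by_cases c2 : l = 2*s-4 ∨ l = 2*s
    · rw [if_pos (by omega), if_pos c2]
    · rw [if_neg (by omega), if_neg c2]

end Stmt16Aux


/-- for μ = 2 and n = 2s - 1, the overdetermined moment system has an
admissible solution iff U_s(ω/2) = 0; in that case m = 2s - 2, the nodes are exactly the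
roots of ℛ_{s-1}(ω;z²), and all X_k = Z_k z_k^{n-1} are real. -/
theorem stmt16 (s : ℕ) (hs : 2 ≤ s) (n : ℕ) (hn : n = 2 * s - 1) (ω : ℝ) :
    ((∃ (m : ℕ) (_ : m ≤ n) (Z z : Fin m → ℂ),
        (∀ k, Z k ≠ 0) ∧ Function.Injective z ∧ (∀ k, ‖z k‖ = 1) ∧
        ∀ l : ℤ, 0 ≤ l → l ≤ 2 * (n : ℤ) - 1 →
          ∑ k : Fin m, Z k * z k ^ l =
            if l = (n : ℤ) - 1 then (ω : ℂ)
            else if l = (n : ℤ) - 3 ∨ l = (n : ℤ) + 1 then 1 else 0)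
      ↔ Polynomial.eval (ω / 2) (Polynomial.Chebyshev.U ℝ s) = 0)
    ∧ ∀ (m : ℕ), m ≤ n → ∀ (Z z : Fin m → ℂ),
        (∀ k, Z k ≠ 0) → Function.Injective z → (∀ k, ‖z k‖ = 1) →
        (∀ l : ℤ, 0 ≤ l → l ≤ 2 * (n : ℤ) - 1 →
          ∑ k : Fin m, Z k * z k ^ l =
            if l = (n : ℤ) - 1 then (ω : ℂ)
            else if l = (n : ℤ) - 3 ∨ l = (n : ℤ) + 1 then 1 else 0) →
        m = 2 * s - 2 ∧
        Set.range z = {t : ℂ | ∑ k ∈ Finset.range s, ((chebr k ω : ℝ) : ℂ) * t ^ (2 * k) = 0} ∧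
        ∀ k, (Z k * z k ^ (n - 1)).im = 0 := by
  have toN : ∀ (m : ℕ) (Z z : Fin m → ℂ),
      (∀ l : ℤ, 0 ≤ l → l ≤ 2 * (n : ℤ) - 1 →
        ∑ k : Fin m, Z k * z k ^ l =
          if l = (n : ℤ) - 1 then (ω : ℂ)
          else if l = (n : ℤ) - 3 ∨ l = (n : ℤ) + 1 then 1 else 0) →
      ∀ l : ℕ, l ≤ 4*s-3 → ∑ k : Fin m, Z k * z k ^ l = Stmt16Aux.Sn s ω l := by
    intro m Z z hmomZ l hl
    have h := hmomZ (l:ℤ) (by positivity) (by omega)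
    rw [Stmt16Aux.ITE_eq s n ω hs hn l] at h
    rw [← h]
    refine Finset.sum_congr rfl fun k _ => ?_
    rw [zpow_natCast]
  constructor
  · constructor
    · rintro ⟨m, hm, Z, z, hZ, hinj, habs, hmomZ⟩
      have hA := Stmt16Aux.partA s ω hs Z z hZ hinj habs
        (by rw [Fintype.card_fin]; omega) (toN m Z z hmomZ)
      exact (Stmt16Aux.chebr_zero_iff ω s).mp hA.1
    · intro hU
      have hch : chebr s ω = 0 := (Stmt16Aux.chebr_zero_iff ω s).mpr hU
      obtain ⟨Z, z, hZ, hinj, habs, hmom⟩ := Stmt16Aux.construct s ω hs hch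
      refine ⟨2*s-2, by omega, Z, z, hZ, hinj, habs, ?_⟩
      intro l hl0 hl1
      obtain ⟨l', rfl⟩ := Int.eq_ofNat_of_zero_le hl0
      have hzp : ∑ k, Z k * z k ^ ((l' : ℤ)) = ∑ k, Z k * z k ^ l' :=
        Finset.sum_congr rfl fun k _ => by rw [zpow_natCast]
      rw [hzp, Stmt16Aux.ITE_eq s n ω hs hn l']
      exact hmom l' (by omega)
  · intro m hm Z z hZ hinj habs hmomZ
    have hA := Stmt16Aux.partA s ω hs Z z hZ hinj habs
      (by rw [Fintype.card_fin]; omega) (toN m Z z hmomZ)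
    refine ⟨?_, hA.2.2.1, ?_⟩
    · have := hA.2.1
      rw [Fintype.card_fin] at this
      omega
    · intro k
      have h := hA.2.2.2 k
      rw [show 2*s-2 = n-1 from by omega] at h
      exact Complex.conj_eq_iff_im.mp h
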